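/- Let S be a spider graph with ℓ₁ ≥ 1 legs of length 1, ℓ₂ legs of length 2, and ℓ₃ legs of length 3. Then D(S,x) = x(1+x)^{ℓ₁}(2x+x²)^{ℓ₂}(2x+3x²+x³)^{ℓ₃} + x^{ℓ₁}(2x+x²)^{ℓ₂}(x+3x²+x³)^{ℓ₃}. -/

import Mathlib

open Polynomial Finset

/-- A finite set of vertices dominates the graph. -/
def Dominates {V : Type*} (G : SimpleGraph V) (U : Finset V) : Prop :=
  ∀ v : V, v ∈ U ∨ ∃ u ∈ U, G.Adj u v

/-- The number of dominating sets of size `i`. -/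
noncomputable def domCount {V : Type*} [Fintype V] (G : SimpleGraph V) (i : ℕ) : ℕ :=
  Nat.card {U : Finset V // U.card = i ∧ Dominates G U}

/-- The domination polynomial. -/
noncomputable def domPoly {V : Type*} [Fintype V] (G : SimpleGraph V) : Polynomial ℤ :=
  ∑ i ∈ Finset.range (Fintype.card V + 1), Polynomial.C (domCount G i : ℤ) * Polynomial.X ^ i

/-- Vertices of the spider with `l1` legs of length 1, `l2` legs of length 2 and `l3` legs
of length 3: the center is `none`, and each leg vertex carries its leg and its position
along the leg (position `0` is the endpoint attached to the center). -/
abbrev SpiderV (l1 l2 l3 : ℕ) :=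
  Option ((Fin l1 × Fin 1) ⊕ (Fin l2 × Fin 2) ⊕ (Fin l3 × Fin 3))

/-- Consecutive vertices on a common leg. -/
def legRel {l1 l2 l3 : ℕ} :
    ((Fin l1 × Fin 1) ⊕ (Fin l2 × Fin 2) ⊕ (Fin l3 × Fin 3)) →
      ((Fin l1 × Fin 1) ⊕ (Fin l2 × Fin 2) ⊕ (Fin l3 × Fin 3)) → Prop
  | .inl (a, i), .inl (b, j) => a = b ∧ (i : ℕ) + 1 = (j : ℕ)
  | .inr (.inl (a, i)), .inr (.inl (b, j)) => a = b ∧ (i : ℕ) + 1 = (j : ℕ)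
  | .inr (.inr (a, i)), .inr (.inr (b, j)) => a = b ∧ (i : ℕ) + 1 = (j : ℕ)
  | _, _ => False

/-- The endpoint of a leg that is attached to the center. -/
def isLegEnd {l1 l2 l3 : ℕ} :
    ((Fin l1 × Fin 1) ⊕ (Fin l2 × Fin 2) ⊕ (Fin l3 × Fin 3)) → Prop
  | .inl (_, i) => (i : ℕ) = 0
  | .inr (.inl (_, i)) => (i : ℕ) = 0
  | .inr (.inr (_, i)) => (i : ℕ) = 0

/-- The asymmetric adjacency relation of the spider. -/
def spiderRel {l1 l2 l3 : ℕ} : SpiderV l1 l2 l3 → SpiderV l1 l2 l3 → Prop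
  | none, some x => isLegEnd x
  | some x, some y => legRel x y
  | _, _ => False

/-- The spider graph with `l1` legs of length 1, `l2` legs of length 2, `l3` legs of length 3. -/
def spider (l1 l2 l3 : ℕ) : SimpleGraph (SpiderV l1 l2 l3) :=
  SimpleGraph.fromRel spiderRel

-- ### structured subsets
variable {l1 l2 l3 : ℕ}

abbrev SpData (l1 l2 l3 : ℕ) :=
  Bool × (Fin l1 → Finset (Fin 1)) × (Fin l2 → Finset (Fin 2)) × (Fin l3 → Finset (Fin 3))

def memB (b : Bool) (f1 : Fin l1 → Finset (Fin 1)) (f2 : Fin l2 → Finset (Fin 2))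
    (f3 : Fin l3 → Finset (Fin 3)) : SpiderV l1 l2 l3 → Bool
  | none => b
  | some (.inl (a, i)) => i ∈ f1 a
  | some (.inr (.inl (a, i))) => i ∈ f2 a
  | some (.inr (.inr (a, i))) => i ∈ f3 a

def mkSet (b : Bool) (f1 : Fin l1 → Finset (Fin 1)) (f2 : Fin l2 → Finset (Fin 2))
    (f3 : Fin l3 → Finset (Fin 3)) : Finset (SpiderV l1 l2 l3) :=
  Finset.univ.filter (fun v => memB b f1 f2 f3 v = true)

@[simp] lemma mem_mkSet (b f1 f2 f3) (v : SpiderV l1 l2 l3) :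
    v ∈ mkSet b f1 f2 f3 ↔ memB b f1 f2 f3 v = true := by
  simp [mkSet]

def spiderEquiv (l1 l2 l3 : ℕ) : SpData l1 l2 l3 ≃ Finset (SpiderV l1 l2 l3) where
  toFun p := mkSet p.1 p.2.1 p.2.2.1 p.2.2.2
  invFun U := (decide (none ∈ U),
    fun a => @Finset.filter _ (fun i => (some (.inl (a, i)) : SpiderV l1 l2 l3) ∈ U)
      (fun i => Finset.decidableMem _ U) Finset.univ,
    fun a => @Finset.filter _ (fun i => (some (.inr (.inl (a, i))) : SpiderV l1 l2 l3) ∈ U)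
      (fun i => Finset.decidableMem _ U) Finset.univ,
    fun a => @Finset.filter _ (fun i => (some (.inr (.inr (a, i))) : SpiderV l1 l2 l3) ∈ U)
      (fun i => Finset.decidableMem _ U) Finset.univ)
  left_inv := by
    rintro ⟨b, f1, f2, f3⟩
    refine Prod.ext ?_ (Prod.ext ?_ (Prod.ext ?_ ?_))
    · simp [memB]
    · funext a; ext i; simp [memB]; exact fun _ => Subsingleton.elim _ _
    · funext a; ext i; simp [memB]
    · funext a; ext i; simp [memB]
  right_inv := by
    intro U
    ext v
    match v with
    | none => simp [memB]
    | some (.inl (a, i)) =>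
        simp [memB]; exact fun _ => Subsingleton.elim _ _
    | some (.inr (.inl (a, i))) => simp [memB]
    | some (.inr (.inr (a, i))) => simp [memB]

lemma card_aux {k : ℕ} (S : Finset (Fin k)) :
    (∑ i, if i ∈ S then 1 else 0) = S.card := by
  rw [← Finset.card_filter]
  congr 1
  ext i
  simp

lemma card_mkSet (b : Bool) (f1 : Fin l1 → Finset (Fin 1)) (f2 : Fin l2 → Finset (Fin 2))
    (f3 : Fin l3 → Finset (Fin 3)) :
    (mkSet b f1 f2 f3).card =
      (if b then 1 else 0) + ((∑ a, (f1 a).card) + ((∑ a, (f2 a).card) + ∑ a, (f3 a).card)) := by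
  rw [mkSet, Finset.card_filter]
  rw [Fintype.sum_option]
  rw [Fintype.sum_sum_type, Fintype.sum_sum_type, Fintype.sum_prod_type,
    Fintype.sum_prod_type, Fintype.sum_prod_type]
  simp only [memB, decide_eq_true_eq, card_aux]
  cases b <;> rfl

lemma forall_fin3 (p : Fin 3 → Prop) : (∀ i, p i) ↔ p 0 ∧ p 1 ∧ p 2 := by
  constructor
  · intro h; exact ⟨h 0, h 1, h 2⟩
  · rintro ⟨h0, h1, h2⟩ i; fin_cases i <;> assumption

lemma exists_fin3 (p : Fin 3 → Prop) : (∃ i, p i) ↔ p 0 ∨ p 1 ∨ p 2 := by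
  constructor
  · rintro ⟨i, h⟩; fin_cases i <;> tauto
  · rintro (h | h | h) <;> exact ⟨_, h⟩

lemma dominates_mkSet (b : Bool) (f1 : Fin l1 → Finset (Fin 1)) (f2 : Fin l2 → Finset (Fin 2))
    (f3 : Fin l3 → Finset (Fin 3)) :
    Dominates (spider l1 l2 l3) (mkSet b f1 f2 f3) ↔
      ((b = true ∨ (∃ a, (0:Fin 1) ∈ f1 a) ∨ (∃ a, (0:Fin 2) ∈ f2 a) ∨ (∃ a, (0:Fin 3) ∈ f3 a))
      ∧ (∀ a, (0:Fin 1) ∈ f1 a ∨ b = true)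
      ∧ (∀ a, ((0:Fin 2) ∈ f2 a ∨ b = true ∨ (1:Fin 2) ∈ f2 a) ∧ ((1:Fin 2) ∈ f2 a ∨ (0:Fin 2) ∈ f2 a))
      ∧ (∀ a, ((0:Fin 3) ∈ f3 a ∨ b = true ∨ (1:Fin 3) ∈ f3 a)
          ∧ ((1:Fin 3) ∈ f3 a ∨ (0:Fin 3) ∈ f3 a ∨ (2:Fin 3) ∈ f3 a)
          ∧ ((2:Fin 3) ∈ f3 a ∨ (1:Fin 3) ∈ f3 a))) := by
  unfold Dominates
  simp only [Option.forall, Sum.forall, Prod.forall, Fin.forall_fin_one, Fin.forall_fin_two,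
    forall_fin3, mem_mkSet, memB, decide_eq_true_eq, spider, SimpleGraph.fromRel_adj,
    spiderRel, legRel, isLegEnd, Option.exists, Sum.exists, Prod.exists, Fin.exists_fin_one,
    Fin.exists_fin_two, exists_fin3, ne_eq, Option.some.injEq, Sum.inl.injEq, Sum.inr.injEq,
    Prod.mk.injEq, Fin.val_zero, Fin.val_one, Fin.val_two, reduceCtorEq]
  norm_num
  intro _ _ _
  constructor <;> intro h a <;> obtain ⟨ha, hb, hc⟩ := h a
  · refine ⟨ha, ?_, by tauto⟩
    rcases hb with h | ⟨a', h⟩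
    · tauto
    · rcases h with ⟨h, rfl⟩ | ⟨h, _, rfl⟩ <;> tauto
  · refine ⟨ha, ?_, by tauto⟩
    rcases hb with h | h | h
    · tauto
    · exact Or.inr ⟨a, Or.inl ⟨h, rfl⟩⟩
    · exact Or.inr ⟨a, Or.inr ⟨h, fun _ => by decide, rfl⟩⟩

lemma prod_ite_pi {k l : ℕ} (P : Finset (Fin k) → Prop) [DecidablePred P] :
    (∑ f : Fin l → Finset (Fin k),
        if ∀ a, P (f a) then (X : ℤ[X]) ^ (∑ a, (f a).card) else 0)
      = (∑ S : Finset (Fin k), if P S then (X : ℤ[X]) ^ S.card else 0) ^ l := by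
  have key : ((∑ S : Finset (Fin k), if P S then (X : ℤ[X]) ^ S.card else 0)) ^ l
      = ∏ _a : Fin l, (∑ S : Finset (Fin k), if P S then (X : ℤ[X]) ^ S.card else 0) := by
    simp
  rw [key, Finset.prod_univ_sum]
  rw [Fintype.piFinset_univ]
  refine Finset.sum_congr rfl fun f _ => ?_
  by_cases h : ∀ a, P (f a)
  · rw [if_pos h, Finset.prod_congr rfl (fun a _ => if_pos (h a)),
      Finset.prod_pow_eq_pow_sum]
  · push_neg at h
    obtain ⟨a, ha⟩ := h
    rw [if_neg (by push_neg; exact ⟨a, ha⟩)]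
    exact (Finset.prod_eq_zero (Finset.mem_univ a) (by rw [if_neg ha])).symm

lemma sum_triple {l1 l2 l3 : ℕ} (P1 : Finset (Fin 1) → Prop) (P2 : Finset (Fin 2) → Prop)
    (P3 : Finset (Fin 3) → Prop) [DecidablePred P1] [DecidablePred P2] [DecidablePred P3]
    (c : ℕ) :
    (∑ f1 : Fin l1 → Finset (Fin 1), ∑ f2 : Fin l2 → Finset (Fin 2),
        ∑ f3 : Fin l3 → Finset (Fin 3),
      if (∀ a, P1 (f1 a)) ∧ (∀ a, P2 (f2 a)) ∧ (∀ a, P3 (f3 a)) then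
        (X : ℤ[X]) ^ (c + ((∑ a, (f1 a).card) + ((∑ a, (f2 a).card) + ∑ a, (f3 a).card)))
      else 0)
    = X ^ c * (∑ S : Finset (Fin 1), if P1 S then (X : ℤ[X]) ^ S.card else 0) ^ l1
        * (∑ S : Finset (Fin 2), if P2 S then (X : ℤ[X]) ^ S.card else 0) ^ l2
        * (∑ S : Finset (Fin 3), if P3 S then (X : ℤ[X]) ^ S.card else 0) ^ l3 := by
  have point : ∀ (f1 : Fin l1 → Finset (Fin 1)) (f2 : Fin l2 → Finset (Fin 2))
      (f3 : Fin l3 → Finset (Fin 3)),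
      (if (∀ a, P1 (f1 a)) ∧ (∀ a, P2 (f2 a)) ∧ (∀ a, P3 (f3 a)) then
        (X : ℤ[X]) ^ (c + ((∑ a, (f1 a).card) + ((∑ a, (f2 a).card) + ∑ a, (f3 a).card)))
      else 0)
      = X ^ c * ((if ∀ a, P1 (f1 a) then (X : ℤ[X]) ^ (∑ a, (f1 a).card) else 0)
          * ((if ∀ a, P2 (f2 a) then (X : ℤ[X]) ^ (∑ a, (f2 a).card) else 0)
            * (if ∀ a, P3 (f3 a) then (X : ℤ[X]) ^ (∑ a, (f3 a).card) else 0))) := by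
    intro f1 f2 f3
    by_cases hA : ∀ a, P1 (f1 a) <;> by_cases hB : ∀ a, P2 (f2 a) <;>
      by_cases hC : ∀ a, P3 (f3 a) <;>
      simp [hA, hB, hC, pow_add]
  simp only [point]
  simp only [← Finset.mul_sum, ← Finset.sum_mul]
  rw [prod_ite_pi P1, prod_ite_pi P2, prod_ite_pi P3]
  ring

lemma sum_finsets_fin1 {M : Type*} [AddCommMonoid M] (g : Finset (Fin 1) → M) :
    ∑ S : Finset (Fin 1), g S = g ∅ + g {0} := by
  rw [show (Finset.univ : Finset (Finset (Fin 1))) = {∅, {0}} from by decide]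
  rw [Finset.sum_insert (by decide), Finset.sum_singleton]

lemma sum_finsets_fin2 {M : Type*} [AddCommMonoid M] (g : Finset (Fin 2) → M) :
    ∑ S : Finset (Fin 2), g S = g ∅ + (g {0} + (g {1} + g {0, 1})) := by
  rw [show (Finset.univ : Finset (Finset (Fin 2))) = {∅, {0}, {1}, {0, 1}} from by decide]
  rw [Finset.sum_insert (by decide), Finset.sum_insert (by decide),
    Finset.sum_insert (by decide), Finset.sum_singleton]

lemma sum_finsets_fin3 {M : Type*} [AddCommMonoid M] (g : Finset (Fin 3) → M) :
    ∑ S : Finset (Fin 3), g S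
      = g ∅ + (g {0} + (g {1} + (g {2} + (g {0, 1} + (g {0, 2} + (g {1, 2} + g {0, 1, 2})))))) := by
  rw [show (Finset.univ : Finset (Finset (Fin 3)))
      = {∅, {0}, {1}, {2}, {0, 1}, {0, 2}, {1, 2}, {0, 1, 2}} from by decide]
  rw [Finset.sum_insert (by decide), Finset.sum_insert (by decide),
    Finset.sum_insert (by decide), Finset.sum_insert (by decide),
    Finset.sum_insert (by decide), Finset.sum_insert (by decide),
    Finset.sum_insert (by decide), Finset.sum_singleton]

lemma small1t (P : Finset (Fin 1) → Prop) [DecidablePred P] (h : ∀ S, P S) :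
    ∑ S : Finset (Fin 1), (if P S then (X : ℤ[X]) ^ S.card else 0) = 1 + X := by
  rw [sum_finsets_fin1, if_pos (h _), if_pos (h _)]
  norm_num

lemma small1f (P : Finset (Fin 1) → Prop) [DecidablePred P]
    (h : ∀ S, P S ↔ (0 : Fin 1) ∈ S) :
    ∑ S : Finset (Fin 1), (if P S then (X : ℤ[X]) ^ S.card else 0) = X := by
  rw [sum_finsets_fin1, if_neg (by rw [h]; decide), if_pos (by rw [h]; decide)]
  norm_num

lemma small2 (P : Finset (Fin 2) → Prop) [DecidablePred P]
    (h : ∀ S, P S ↔ ((1 : Fin 2) ∈ S ∨ (0 : Fin 2) ∈ S)) :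
    ∑ S : Finset (Fin 2), (if P S then (X : ℤ[X]) ^ S.card else 0) = 2 * X + X ^ 2 := by
  rw [sum_finsets_fin2, if_neg (by rw [h]; decide), if_pos (by rw [h]; decide),
    if_pos (by rw [h]; decide), if_pos (by rw [h]; decide)]
  rw [show ({0} : Finset (Fin 2)).card = 1 from by decide,
    show ({1} : Finset (Fin 2)).card = 1 from by decide,
    show ({0, 1} : Finset (Fin 2)).card = 2 from by decide]
  ring

lemma small3t (P : Finset (Fin 3) → Prop) [DecidablePred P]
    (h : ∀ S, P S ↔ (((1 : Fin 3) ∈ S ∨ (0 : Fin 3) ∈ S ∨ (2 : Fin 3) ∈ S)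
      ∧ ((2 : Fin 3) ∈ S ∨ (1 : Fin 3) ∈ S))) :
    ∑ S : Finset (Fin 3), (if P S then (X : ℤ[X]) ^ S.card else 0)
      = 2 * X + 3 * X ^ 2 + X ^ 3 := by
  rw [sum_finsets_fin3, if_neg (by rw [h]; decide), if_neg (by rw [h]; decide),
    if_pos (by rw [h]; decide), if_pos (by rw [h]; decide), if_pos (by rw [h]; decide),
    if_pos (by rw [h]; decide), if_pos (by rw [h]; decide), if_pos (by rw [h]; decide)]
  rw [show ({1} : Finset (Fin 3)).card = 1 from by decide,
    show ({2} : Finset (Fin 3)).card = 1 from by decide,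
    show ({0, 1} : Finset (Fin 3)).card = 2 from by decide,
    show ({0, 2} : Finset (Fin 3)).card = 2 from by decide,
    show ({1, 2} : Finset (Fin 3)).card = 2 from by decide,
    show ({0, 1, 2} : Finset (Fin 3)).card = 3 from by decide]
  ring

lemma small3f (P : Finset (Fin 3) → Prop) [DecidablePred P]
    (h : ∀ S, P S ↔ (((0 : Fin 3) ∈ S ∨ (1 : Fin 3) ∈ S)
      ∧ ((1 : Fin 3) ∈ S ∨ (0 : Fin 3) ∈ S ∨ (2 : Fin 3) ∈ S)
      ∧ ((2 : Fin 3) ∈ S ∨ (1 : Fin 3) ∈ S))) :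
    ∑ S : Finset (Fin 3), (if P S then (X : ℤ[X]) ^ S.card else 0)
      = X + 3 * X ^ 2 + X ^ 3 := by
  rw [sum_finsets_fin3, if_neg (by rw [h]; decide), if_neg (by rw [h]; decide),
    if_pos (by rw [h]; decide), if_neg (by rw [h]; decide), if_pos (by rw [h]; decide),
    if_pos (by rw [h]; decide), if_pos (by rw [h]; decide), if_pos (by rw [h]; decide)]
  rw [show ({1} : Finset (Fin 3)).card = 1 from by decide,
    show ({0, 1} : Finset (Fin 3)).card = 2 from by decide,
    show ({0, 2} : Finset (Fin 3)).card = 2 from by decide,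
    show ({1, 2} : Finset (Fin 3)).card = 2 from by decide,
    show ({0, 1, 2} : Finset (Fin 3)).card = 3 from by decide]
  ring

open Classical in
lemma domPoly_eq_sum {V : Type*} [Fintype V] (G : SimpleGraph V) :
    domPoly G = ∑ U : Finset V, if Dominates G U then (X : ℤ[X]) ^ U.card else 0 := by
  classical
  rw [← Finset.sum_fiberwise_of_maps_to (g := fun U : Finset V => U.card)
    (t := Finset.range (Fintype.card V + 1))
    (fun U _ => Finset.mem_range.2 (Nat.lt_succ_of_le (Finset.card_le_univ U)))]
  unfold domPoly
  refine Finset.sum_congr rfl fun i _ => ?_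
  have key : ∀ U ∈ Finset.univ.filter (fun U : Finset V => U.card = i),
      (if Dominates G U then (X : ℤ[X]) ^ U.card else 0)
        = if Dominates G U then (X : ℤ[X]) ^ i else 0 := by
    intro U hU
    rw [Finset.mem_filter] at hU
    rw [hU.2]
  rw [Finset.sum_congr rfl key, ← Finset.sum_filter, Finset.filter_filter,
    Finset.sum_const]
  have : domCount G i = (Finset.univ.filter
      (fun U : Finset V => U.card = i ∧ Dominates G U)).card := by
    rw [domCount, Nat.card_eq_fintype_card, Fintype.card_subtype]
  rw [this, nsmul_eq_mul]
  rfl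


set_option maxHeartbeats 1000000 in
theorem domPoly_spider_pos (l1 l2 l3 : ℕ) (h1 : 1 ≤ l1) :
    domPoly (spider l1 l2 l3) =
      X * (1 + X) ^ l1 * (2 * X + X ^ 2) ^ l2 * (2 * X + 3 * X ^ 2 + X ^ 3) ^ l3
        + X ^ l1 * (2 * X + X ^ 2) ^ l2 * (X + 3 * X ^ 2 + X ^ 3) ^ l3 := by
  classical
  have e1 : ∀ (f1 : Fin l1 → Finset (Fin 1)) (f2 : Fin l2 → Finset (Fin 2))
      (f3 : Fin l3 → Finset (Fin 3)),
      Dominates (spider l1 l2 l3) (mkSet true f1 f2 f3) ↔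
        ((∀ a, ((0 : Fin 1) ∈ f1 a ∨ True))
          ∧ (∀ a, ((1 : Fin 2) ∈ f2 a ∨ (0 : Fin 2) ∈ f2 a))
          ∧ (∀ a, ((1 : Fin 3) ∈ f3 a ∨ (0 : Fin 3) ∈ f3 a ∨ (2 : Fin 3) ∈ f3 a)
              ∧ ((2 : Fin 3) ∈ f3 a ∨ (1 : Fin 3) ∈ f3 a))) := by
    intro f1 f2 f3
    rw [dominates_mkSet]
    constructor
    · rintro ⟨-, -, hB, hC⟩
      exact ⟨fun a => Or.inr trivial, fun a => (hB a).2,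
        fun a => ⟨(hC a).2.1, by have := (hC a).2.2; tauto⟩⟩
    · rintro ⟨-, hB, hC⟩
      exact ⟨Or.inl rfl, fun a => Or.inr rfl,
        fun a => ⟨Or.inr (Or.inl rfl), hB a⟩,
        fun a => ⟨Or.inr (Or.inl rfl), (hC a).1, (hC a).2⟩⟩
  have e2 : ∀ (f1 : Fin l1 → Finset (Fin 1)) (f2 : Fin l2 → Finset (Fin 2))
      (f3 : Fin l3 → Finset (Fin 3)),
      Dominates (spider l1 l2 l3) (mkSet false f1 f2 f3) ↔
        ((∀ a, (0 : Fin 1) ∈ f1 a)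
          ∧ (∀ a, ((1 : Fin 2) ∈ f2 a ∨ (0 : Fin 2) ∈ f2 a))
          ∧ (∀ a, ((0 : Fin 3) ∈ f3 a ∨ (1 : Fin 3) ∈ f3 a)
              ∧ ((1 : Fin 3) ∈ f3 a ∨ (0 : Fin 3) ∈ f3 a ∨ (2 : Fin 3) ∈ f3 a)
              ∧ ((2 : Fin 3) ∈ f3 a ∨ (1 : Fin 3) ∈ f3 a))) := by
    intro f1 f2 f3
    rw [dominates_mkSet]
    constructor
    · rintro ⟨-, hA, hB, hC⟩
      refine ⟨fun a => by have := hA a; simpa using this, fun a => (hB a).2,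
        fun a => ⟨by have := (hC a).1; simp at this; tauto,
          (hC a).2.1, (hC a).2.2⟩⟩
    · rintro ⟨hA, hB, hC⟩
      refine ⟨Or.inr (Or.inl ⟨⟨0, h1⟩, hA _⟩), fun a => Or.inl (hA a),
        fun a => ⟨by have := hB a; tauto, by have := hB a; tauto⟩,
        fun a => ⟨by have := (hC a).1; tauto, (hC a).2.1, (hC a).2.2⟩⟩
  have htrue :
      (∑ f1 : Fin l1 → Finset (Fin 1), ∑ f2 : Fin l2 → Finset (Fin 2),
          ∑ f3 : Fin l3 → Finset (Fin 3),
        if Dominates (spider l1 l2 l3) (mkSet true f1 f2 f3) then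
          (X : ℤ[X]) ^ (mkSet true f1 f2 f3).card else 0)
      = X * (1 + X) ^ l1 * (2 * X + X ^ 2) ^ l2 * (2 * X + 3 * X ^ 2 + X ^ 3) ^ l3 := by
    calc
      _ = ∑ f1 : Fin l1 → Finset (Fin 1), ∑ f2 : Fin l2 → Finset (Fin 2),
          ∑ f3 : Fin l3 → Finset (Fin 3),
          if (∀ a, ((0 : Fin 1) ∈ f1 a ∨ True))
              ∧ (∀ a, ((1 : Fin 2) ∈ f2 a ∨ (0 : Fin 2) ∈ f2 a))
              ∧ (∀ a, ((1 : Fin 3) ∈ f3 a ∨ (0 : Fin 3) ∈ f3 a ∨ (2 : Fin 3) ∈ f3 a)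
                  ∧ ((2 : Fin 3) ∈ f3 a ∨ (1 : Fin 3) ∈ f3 a)) then
            (X : ℤ[X]) ^ (1 + ((∑ a, (f1 a).card) + ((∑ a, (f2 a).card) + ∑ a, (f3 a).card)))
          else 0 := by
        refine Finset.sum_congr rfl fun f1 _ => Finset.sum_congr rfl fun f2 _ =>
          Finset.sum_congr rfl fun f3 _ => ?_
        exact if_congr (e1 f1 f2 f3) (by rw [card_mkSet]; norm_num) rfl
      _ = X ^ 1
            * (∑ S : Finset (Fin 1), if (0 : Fin 1) ∈ S ∨ True then (X : ℤ[X]) ^ S.card else 0) ^ l1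
            * (∑ S : Finset (Fin 2), if (1 : Fin 2) ∈ S ∨ (0 : Fin 2) ∈ S then (X : ℤ[X]) ^ S.card else 0) ^ l2
            * (∑ S : Finset (Fin 3), if ((1 : Fin 3) ∈ S ∨ (0 : Fin 3) ∈ S ∨ (2 : Fin 3) ∈ S)
                ∧ ((2 : Fin 3) ∈ S ∨ (1 : Fin 3) ∈ S) then (X : ℤ[X]) ^ S.card else 0) ^ l3 :=
        sum_triple (fun S => (0 : Fin 1) ∈ S ∨ True)
          (fun S => (1 : Fin 2) ∈ S ∨ (0 : Fin 2) ∈ S)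
          (fun S => ((1 : Fin 3) ∈ S ∨ (0 : Fin 3) ∈ S ∨ (2 : Fin 3) ∈ S)
            ∧ ((2 : Fin 3) ∈ S ∨ (1 : Fin 3) ∈ S)) 1
      _ = X * (1 + X) ^ l1 * (2 * X + X ^ 2) ^ l2 * (2 * X + 3 * X ^ 2 + X ^ 3) ^ l3 := by
        rw [small1t _ (fun S => Or.inr trivial), small2 _ (fun S => Iff.rfl),
          small3t _ (fun S => Iff.rfl)]
        ring
  have hfalse :
      (∑ f1 : Fin l1 → Finset (Fin 1), ∑ f2 : Fin l2 → Finset (Fin 2),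
          ∑ f3 : Fin l3 → Finset (Fin 3),
        if Dominates (spider l1 l2 l3) (mkSet false f1 f2 f3) then
          (X : ℤ[X]) ^ (mkSet false f1 f2 f3).card else 0)
      = X ^ l1 * (2 * X + X ^ 2) ^ l2 * (X + 3 * X ^ 2 + X ^ 3) ^ l3 := by
    calc
      _ = ∑ f1 : Fin l1 → Finset (Fin 1), ∑ f2 : Fin l2 → Finset (Fin 2),
          ∑ f3 : Fin l3 → Finset (Fin 3),
          if (∀ a, (0 : Fin 1) ∈ f1 a)
              ∧ (∀ a, ((1 : Fin 2) ∈ f2 a ∨ (0 : Fin 2) ∈ f2 a))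
              ∧ (∀ a, ((0 : Fin 3) ∈ f3 a ∨ (1 : Fin 3) ∈ f3 a)
                  ∧ ((1 : Fin 3) ∈ f3 a ∨ (0 : Fin 3) ∈ f3 a ∨ (2 : Fin 3) ∈ f3 a)
                  ∧ ((2 : Fin 3) ∈ f3 a ∨ (1 : Fin 3) ∈ f3 a)) then
            (X : ℤ[X]) ^ (0 + ((∑ a, (f1 a).card) + ((∑ a, (f2 a).card) + ∑ a, (f3 a).card)))
          else 0 := by
        refine Finset.sum_congr rfl fun f1 _ => Finset.sum_congr rfl fun f2 _ =>
          Finset.sum_congr rfl fun f3 _ => ?_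
        exact if_congr (e2 f1 f2 f3) (by rw [card_mkSet]; norm_num) rfl
      _ = X ^ 0
            * (∑ S : Finset (Fin 1), if (0 : Fin 1) ∈ S then (X : ℤ[X]) ^ S.card else 0) ^ l1
            * (∑ S : Finset (Fin 2), if (1 : Fin 2) ∈ S ∨ (0 : Fin 2) ∈ S then (X : ℤ[X]) ^ S.card else 0) ^ l2
            * (∑ S : Finset (Fin 3), if ((0 : Fin 3) ∈ S ∨ (1 : Fin 3) ∈ S)
                ∧ ((1 : Fin 3) ∈ S ∨ (0 : Fin 3) ∈ S ∨ (2 : Fin 3) ∈ S)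
                ∧ ((2 : Fin 3) ∈ S ∨ (1 : Fin 3) ∈ S) then (X : ℤ[X]) ^ S.card else 0) ^ l3 :=
        sum_triple (fun S => (0 : Fin 1) ∈ S)
          (fun S => (1 : Fin 2) ∈ S ∨ (0 : Fin 2) ∈ S)
          (fun S => ((0 : Fin 3) ∈ S ∨ (1 : Fin 3) ∈ S)
            ∧ ((1 : Fin 3) ∈ S ∨ (0 : Fin 3) ∈ S ∨ (2 : Fin 3) ∈ S)
            ∧ ((2 : Fin 3) ∈ S ∨ (1 : Fin 3) ∈ S)) 0
      _ = X ^ l1 * (2 * X + X ^ 2) ^ l2 * (X + 3 * X ^ 2 + X ^ 3) ^ l3 := by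
        rw [small1f _ (fun S => Iff.rfl), small2 _ (fun S => Iff.rfl),
          small3f _ (fun S => Iff.rfl)]
        ring
  rw [domPoly_eq_sum]
  rw [← Equiv.sum_comp (spiderEquiv l1 l2 l3)
    (fun U => if Dominates (spider l1 l2 l3) U then (X : ℤ[X]) ^ U.card else 0)]
  rw [Fintype.sum_prod_type, Fintype.sum_bool]
  simp only [Fintype.sum_prod_type, spiderEquiv, Equiv.coe_fn_mk]
  exact congrArg₂ (· + ·) htrue hfalse
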